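/- Let θ₁,...,θ_k, φ₁,...,φ_k be real numbers such that for all integers a₁,...,a_k, if Σ aᵢθᵢ ∈ ℤ then Σ aᵢφᵢ ∈ ℤ. Then for every ε > 0 there exist n ∈ ℕ and integers r₁,...,r_k such that |n θᵢ − rᵢ − φᵢ| ≤ ε for all i. -/

import Mathlib

open MeasureTheory
open scoped Real
open Complex

/-! ### Characters of the torus -/

noncomputable def kchar {k : ℕ} (a : Fin k → ℤ) : (Fin k → AddCircle (1:ℝ)) → ℂ :=
  fun g => ∏ i, (AddCircle.toCircle (a i • g i) : ℂ)

lemma kchar_add {k : ℕ} (a : Fin k → ℤ) (g h : Fin k → AddCircle (1:ℝ)) :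
    kchar a (g + h) = kchar a g * kchar a h := by
  unfold kchar
  rw [← Finset.prod_mul_distrib]
  refine Finset.prod_congr rfl fun i _ => ?_
  rw [Pi.add_apply, smul_add, AddCircle.toCircle_add]
  push_cast
  ring

lemma continuous_kchar {k : ℕ} (a : Fin k → ℤ) : Continuous (kchar a) := by
  unfold kchar
  refine continuous_finset_prod _ fun i _ => ?_
  exact continuous_induced_dom.comp <| AddCircle.continuous_toCircle.comp <|
    (continuous_zsmul (a i)).comp (continuous_apply i)

lemma kchar_real {k : ℕ} (a : Fin k → ℤ) (u : Fin k → ℝ) :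
    kchar a (fun i => (u i : AddCircle (1:ℝ))) =
      Complex.exp ((2 * π * I) * ∑ i, (a i : ℝ) * u i) := by
  unfold kchar
  have : ∀ i, (a i • ((u i : AddCircle (1:ℝ)))) = ((a i * u i : ℝ) : AddCircle (1:ℝ)) := by
    intro i
    rw [← AddCircle.coe_zsmul]
    norm_num [zsmul_eq_mul]
  simp_rw [this, AddCircle.toCircle_apply_mk, Circle.coe_exp]
  rw [← Complex.exp_sum]
  congr 1
  push_cast
  rw [Finset.mul_sum]
  refine Finset.sum_congr rfl fun i _ => ?_
  ring

lemma kchar_eq_one_iff {k : ℕ} (a : Fin k → ℤ) (u : Fin k → ℝ) :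
    kchar a (fun i => (u i : AddCircle (1:ℝ))) = 1 ↔ ∃ m : ℤ, ∑ i, (a i : ℝ) * u i = m := by
  rw [kchar_real, Complex.exp_eq_one_iff]
  constructor
  · rintro ⟨n, hn⟩
    refine ⟨n, ?_⟩
    have h2 : (2 * π * I) ≠ 0 := by
      simp [Real.pi_ne_zero, Complex.I_ne_zero]
    rw [mul_comm (n:ℂ) _] at hn
    have := mul_left_cancel₀ h2 hn
    exact_mod_cast this
  · rintro ⟨m, hm⟩
    exact ⟨m, by rw [hm]; push_cast; ring⟩

noncomputable def kcharC {k : ℕ} (a : Fin k → ℤ) : C(Fin k → AddCircle (1:ℝ), ℂ) :=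
  ⟨kchar a, continuous_kchar a⟩

lemma kcharC_mul {k : ℕ} (a b : Fin k → ℤ) : kcharC a * kcharC b = kcharC (a + b) := by
  ext g
  simp only [ContinuousMap.mul_apply, kcharC, ContinuousMap.coe_mk]
  unfold kchar
  rw [← Finset.prod_mul_distrib]
  refine Finset.prod_congr rfl fun i _ => ?_
  rw [Pi.add_apply, add_smul, AddCircle.toCircle_add]
  push_cast; ring

lemma kcharC_star {k : ℕ} (a : Fin k → ℤ) : star (kcharC a) = kcharC (-a) := by
  ext g
  simp only [ContinuousMap.star_apply, kcharC, ContinuousMap.coe_mk]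
  unfold kchar
  rw [star_prod]
  refine Finset.prod_congr rfl fun i _ => ?_
  rw [Pi.neg_apply, neg_smul]
  have h1 : AddCircle.toCircle (a i • g i) * AddCircle.toCircle (-(a i • g i)) = 1 := by
    rw [← AddCircle.toCircle_add]; simp
  have h2 : AddCircle.toCircle (-(a i • g i)) = (AddCircle.toCircle (a i • g i))⁻¹ :=
    eq_inv_of_mul_eq_one_right ((mul_comm _ _).trans h1 ▸ h1)
  rw [h2, Circle.coe_inv_eq_conj]
  rfl

lemma kcharC_zero {k : ℕ} : kcharC (0 : Fin k → ℤ) = 1 := by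
  ext g
  simp [kcharC, kchar]

/-! ### Span of characters -/

noncomputable def charSpan (k : ℕ) : Submodule ℂ C(Fin k → AddCircle (1:ℝ), ℂ) :=
  Submodule.span ℂ (Set.range fun a : Fin k → ℤ => kcharC a)

lemma charSpan_mul {k : ℕ} {P Q : C(Fin k → AddCircle (1:ℝ), ℂ)} (hP : P ∈ charSpan k)
    (hQ : Q ∈ charSpan k) : P * Q ∈ charSpan k := by
  induction hP using Submodule.span_induction with
  | mem p hp =>
    induction hQ using Submodule.span_induction with
    | mem q hq =>
      obtain ⟨a, rfl⟩ := hp; obtain ⟨b, rfl⟩ := hq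
      rw [kcharC_mul]
      exact Submodule.subset_span ⟨a + b, rfl⟩
    | zero => rw [mul_zero]; exact zero_mem _
    | add q r _ _ hq hr => rw [mul_add]; exact add_mem hq hr
    | smul c q _ hq => rw [mul_smul_comm]; exact Submodule.smul_mem _ _ hq
  | zero => rw [zero_mul]; exact zero_mem _
  | add p r _ _ hp hr => rw [add_mul]; exact add_mem hp hr
  | smul c p _ hp => rw [smul_mul_assoc]; exact Submodule.smul_mem _ _ hp

lemma charSpan_star {k : ℕ} {P : C(Fin k → AddCircle (1:ℝ), ℂ)} (hP : P ∈ charSpan k) :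
    star P ∈ charSpan k := by
  induction hP using Submodule.span_induction with
  | mem p hp =>
    obtain ⟨a, rfl⟩ := hp
    rw [kcharC_star]
    exact Submodule.subset_span ⟨-a, rfl⟩
  | zero => rw [star_zero]; exact zero_mem _
  | add p r _ _ hp hr => rw [star_add]; exact add_mem hp hr
  | smul c p _ hp => rw [star_smul]; exact Submodule.smul_mem _ _ hp

/-! ### Orbit closure -/

lemma orbit_closure {G : Type*} [AddCommGroup G] [MetricSpace G] [IsTopologicalAddGroup G]
    [CompactSpace G] (x : G) :
    (AddSubgroup.zmultiples x : Set G) ⊆ closure (Set.range fun n : ℕ => n • x) := by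
  set S : AddSubmonoid G := (AddSubmonoid.multiples x).topologicalClosure with hS
  have hrange : (Set.range fun n : ℕ => n • x) = (AddSubmonoid.multiples x : Set G) := by
    ext g; simp [AddSubmonoid.mem_multiples_iff]
  rw [hrange]
  have hmem : ∀ n : ℕ, n • x ∈ (S : Set G) := fun n =>
    subset_closure ⟨n, rfl⟩
  have hneg : -x ∈ S := by
    obtain ⟨z, -, φ, hφ, hz⟩ := isCompact_univ.tendsto_subseq
      (fun n : ℕ => Set.mem_univ (n • x))
    have key : Filter.Tendsto (fun j => (φ (j+1) - φ j - 1) • x) Filter.atTop (nhds (-x)) := by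
      have h1 : Filter.Tendsto (fun j => (φ (j+1)) • x) Filter.atTop (nhds z) :=
        hz.comp (Filter.tendsto_add_atTop_nat 1 |>.comp Filter.tendsto_id) |>.congr (fun j => rfl)
      have h2 : Filter.Tendsto (fun j => (φ (j+1)) • x - (φ j) • x - x) Filter.atTop
          (nhds (z - z - x)) := ((h1.sub hz).sub tendsto_const_nhds)
      simp only [sub_self, zero_sub] at h2
      refine h2.congr fun j => ?_
      have hge : φ j + 1 ≤ φ (j + 1) := hφ (Nat.lt_succ_self j)
      have : (φ (j+1) - φ j - 1) + (φ j + 1) = φ (j + 1) := by omega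
      calc (φ (j+1)) • x - (φ j) • x - x
          = ((φ (j+1) - φ j - 1) + (φ j + 1)) • x - (φ j) • x - x := by rw [this]
        _ = (φ (j+1) - φ j - 1) • x := by rw [add_nsmul, add_nsmul, one_nsmul]; abel
    exact (AddSubmonoid.multiples x).isClosed_topologicalClosure.mem_of_tendsto key
      (Filter.Eventually.of_forall fun j => hmem _)
  intro g hg
  obtain ⟨n, rfl⟩ := AddSubgroup.mem_zmultiples_iff.mp hg
  show n • x ∈ (S : Set G)
  rcases le_or_gt 0 n with h | h
  · lift n to ℕ using h
    rw [natCast_zsmul]; exact hmem n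
  · have : n • x = (-n).toNat • (-x) := by
      rw [← natCast_zsmul (-x) ((-n).toNat), Int.toNat_of_nonneg (by omega : (0:ℤ) ≤ -n)]
      simp
    rw [this]
    exact AddSubmonoid.nsmul_mem S hneg _

/-! ### Key lemma: membership in the closed subgroup generated by x -/

set_option maxHeartbeats 2000000 in
set_option synthInstance.maxHeartbeats 400000 in
lemma key_mem_closure {k : ℕ} (x y : Fin k → AddCircle (1:ℝ))
    (hchar : ∀ a : Fin k → ℤ, kchar a x = 1 → kchar a y = 1) :
    y ∈ closure ((AddSubgroup.zmultiples x : AddSubgroup (Fin k → AddCircle (1:ℝ))) :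
      Set (Fin k → AddCircle (1:ℝ))) := by
  by_contra hy
  set Hgrp : AddSubgroup (Fin k → AddCircle (1:ℝ)) := (AddSubgroup.zmultiples x).topologicalClosure with hHdef
  have hHcoe : (Hgrp : Set (Fin k → AddCircle (1:ℝ))) = closure ((AddSubgroup.zmultiples x : AddSubgroup (Fin k → AddCircle (1:ℝ))) : Set (Fin k → AddCircle (1:ℝ))) :=
    rfl
  have hHclosed : IsClosed (Hgrp : Set (Fin k → AddCircle (1:ℝ))) := AddSubgroup.isClosed_topologicalClosure _
  have hyH : y ∉ (Hgrp : Set (Fin k → AddCircle (1:ℝ))) := by rw [hHcoe]; exact hy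
  have hxH : x ∈ Hgrp := AddSubgroup.le_topologicalClosure _ (AddSubgroup.mem_zmultiples x)
  -- Haar measure on the closed subgroup
  haveI : CompactSpace ↥Hgrp := isCompact_iff_compactSpace.mp hHclosed.isCompact
  letI : MeasurableSpace ↥Hgrp := borel _
  haveI : BorelSpace ↥Hgrp := ⟨rfl⟩
  set μ : Measure ↥Hgrp :=
    Measure.addHaarMeasure (⊤ : TopologicalSpace.PositiveCompacts ↥Hgrp) with hμ
  haveI : IsFiniteMeasure μ := CompactSpace.isFiniteMeasure
  set c : ℝ := (μ Set.univ).toReal with hc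
  have hcpos : 0 < c :=
    ENNReal.toReal_pos (isOpen_univ.measure_ne_zero μ Set.univ_nonempty) (measure_ne_top μ _)
  -- integrability
  have integr : ∀ (Φ : C((Fin k → AddCircle (1:ℝ)), ℂ)) (g : (Fin k → AddCircle (1:ℝ))), Integrable (fun h : ↥Hgrp => Φ (g + ↑h)) μ := by
    intro Φ g
    have hcont : Continuous fun h : ↥Hgrp => Φ (g + (↑h : (Fin k → AddCircle (1:ℝ)))) :=
      Φ.continuous.comp (continuous_const.add continuous_subtype_val)
    exact integrableOn_univ.mp
      (hcont.continuousOn.integrableOn_compact' isCompact_univ MeasurableSet.univ)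
  set I : C((Fin k → AddCircle (1:ℝ)), ℂ) → (Fin k → AddCircle (1:ℝ)) → ℂ := fun Φ g => ∫ h : ↥Hgrp, Φ (g + ↑h) ∂μ with hI
  -- characters: I χ y = I χ 0
  have hcharI : ∀ a : Fin k → ℤ, I (kcharC a) y = I (kcharC a) 0 := by
    intro a
    have hIg : ∀ g : (Fin k → AddCircle (1:ℝ)), I (kcharC a) g = kchar a g * I (kcharC a) 0 := by
      intro g
      simp only [hI]
      rw [← integral_const_mul]
      refine integral_congr_ae (Filter.Eventually.of_forall fun h => ?_)
      show kchar a (g + ↑h) = kchar a g * kchar a ((0:(Fin k → AddCircle (1:ℝ))) + ↑h)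
      rw [zero_add, kchar_add]
    by_cases hx1 : kchar a x = 1
    · rw [hIg y, hchar a hx1, one_mul]
    · have h0 : I (kcharC a) 0 = 0 := by
        have hinv : ∫ h : ↥Hgrp, (kcharC a) ((0:(Fin k → AddCircle (1:ℝ))) + ↑((⟨x, hxH⟩ : ↥Hgrp) + h)) ∂μ
            = ∫ h : ↥Hgrp, (kcharC a) ((0:(Fin k → AddCircle (1:ℝ))) + ↑h) ∂μ :=
          integral_add_left_eq_self (μ := μ) (fun h : ↥Hgrp => (kcharC a) ((0:(Fin k → AddCircle (1:ℝ))) + ↑h)) _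
        have heq : ∀ h : ↥Hgrp, (kcharC a) ((0:(Fin k → AddCircle (1:ℝ))) + ↑((⟨x, hxH⟩ : ↥Hgrp) + h))
            = kchar a x * (kcharC a) ((0:(Fin k → AddCircle (1:ℝ))) + ↑h) := by
          intro h
          show kchar a ((0:(Fin k → AddCircle (1:ℝ))) + (x + ↑h)) = kchar a x * kchar a ((0:(Fin k → AddCircle (1:ℝ))) + ↑h)
          rw [zero_add, zero_add, kchar_add]
        rw [integral_congr_ae (Filter.Eventually.of_forall heq), integral_const_mul] at hinv
        have hne : kchar a x - 1 ≠ 0 := sub_ne_zero.mpr hx1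
        have : (kchar a x - 1) * (∫ h : ↥Hgrp, (kcharC a) ((0:(Fin k → AddCircle (1:ℝ))) + ↑h) ∂μ) = 0 := by
          rw [sub_mul, one_mul, hinv, sub_self]
        exact (mul_eq_zero.mp this).resolve_left hne
      rw [hIg y, h0, mul_zero]
  -- linearity: I P y = I P 0 for all P in the span
  have hspanI : ∀ P ∈ charSpan k, I P y = I P 0 := by
    intro P hP
    induction hP using Submodule.span_induction with
    | mem p hp => obtain ⟨a, rfl⟩ := hp; exact hcharI a
    | zero => simp [hI]
    | add p q hp hq ihp ihq =>
      have key : ∀ g, I (p + q) g = I p g + I q g := fun g => by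
        simp only [hI, ContinuousMap.add_apply]
        exact integral_add (integr p g) (integr q g)
      rw [key y, key 0, ihp, ihq]
    | smul r p hp ihp =>
      have key : ∀ g, I (r • p) g = r * I p g := fun g => by
        simp only [hI, ContinuousMap.smul_apply, smul_eq_mul]
        exact integral_const_mul r _
      rw [key y, key 0, ihp]
  -- Urysohn function
  have hBc : IsClosed ((fun g => y + g) '' (Hgrp : Set (Fin k → AddCircle (1:ℝ)))) :=
    (Homeomorph.addLeft y).isClosedMap _ hHclosed
  have hdisj : Disjoint (Hgrp : Set (Fin k → AddCircle (1:ℝ))) ((fun g => y + g) '' (Hgrp : Set (Fin k → AddCircle (1:ℝ)))) := by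
    rw [Set.disjoint_left]
    rintro g hg ⟨h', hh', rfl⟩
    exact hyH (by simpa using Hgrp.sub_mem hg hh')
  obtain ⟨f, hf0, hf1, hf01⟩ := exists_continuous_zero_one_of_isClosed hHclosed hBc hdisj
  set F : C((Fin k → AddCircle (1:ℝ)), ℂ) := ContinuousMap.comp ⟨Complex.ofReal, Complex.continuous_ofReal⟩ f with hF
  have hIF0 : I F 0 = 0 := by
    simp only [hI]
    rw [integral_eq_zero_of_ae (Filter.Eventually.of_forall fun h => ?_)]
    show (F ((0:(Fin k → AddCircle (1:ℝ))) + ↑h) : ℂ) = 0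
    rw [zero_add]
    simp [hF, hf0 h.2]
  have hIFy : I F y = (c : ℂ) := by
    simp only [hI]
    have heq : ∀ h : ↥Hgrp, F (y + ↑h) = (1 : ℂ) := by
      intro h
      have : (y + (↑h : (Fin k → AddCircle (1:ℝ)))) ∈ (fun g => y + g) '' (Hgrp : Set (Fin k → AddCircle (1:ℝ))) := ⟨↑h, h.2, rfl⟩
      simp [hF, hf1 this]
    rw [integral_congr_ae (Filter.Eventually.of_forall heq), integral_const]
    simp [hc]
    rfl
  -- Stone-Weierstrass
  set Aalg : StarSubalgebra ℂ C((Fin k → AddCircle (1:ℝ)), ℂ) :=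
    StarAlgebra.adjoin ℂ (Set.range fun a : Fin k → ℤ => kcharC a) with hAalg
  have hsep : Aalg.SeparatesPoints := by
    intro g g' hgg'
    have : ∃ i, g i ≠ g' i := by
      by_contra hcc; push_neg at hcc; exact hgg' (funext hcc)
    obtain ⟨i, hi⟩ := this
    refine ⟨_, ⟨kcharC (Pi.single i 1),
      StarAlgebra.subset_adjoin ℂ _ ⟨Pi.single i 1, rfl⟩, rfl⟩, ?_⟩
    have hval : ∀ g : (Fin k → AddCircle (1:ℝ)), kchar (Pi.single i 1) g = (AddCircle.toCircle (g i) : ℂ) := by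
      intro g
      show ∏ j, (AddCircle.toCircle ((Pi.single i 1 : Fin k → ℤ) j • g j) : ℂ)
        = (AddCircle.toCircle (g i) : ℂ)
      rw [Finset.prod_eq_single i]
      · rw [Pi.single_eq_same, one_smul]
      · intro j _ hj
        rw [Pi.single_eq_of_ne hj, zero_smul]
        simp
      · intro hni; exact absurd (Finset.mem_univ i) hni
    show kchar (Pi.single i 1) g ≠ kchar (Pi.single i 1) g'
    rw [hval, hval]
    intro hEq
    exact hi (AddCircle.injective_toCircle one_ne_zero (Subtype.ext hEq))
  have htop := ContinuousMap.starSubalgebra_topologicalClosure_eq_top_of_separatesPoints Aalg hsep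
  have hFmem : F ∈ closure (Aalg : Set C((Fin k → AddCircle (1:ℝ)), ℂ)) := by
    have : F ∈ Aalg.topologicalClosure := htop ▸ StarSubalgebra.mem_top
    exact this
  obtain ⟨P, hPA, hPF⟩ := Metric.mem_closure_iff.mp hFmem (1/3) (by norm_num)
  -- adjoin ≤ span
  have hPspan : P ∈ charSpan k := by
    have : ∀ Q ∈ Aalg, Q ∈ charSpan k := by
      intro Q hQ
      induction hQ using StarAlgebra.adjoin_induction with
      | mem q hq => exact Submodule.subset_span hq
      | algebraMap r =>
        have : algebraMap ℂ C((Fin k → AddCircle (1:ℝ)), ℂ) r = r • kcharC 0 := by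
          rw [kcharC_zero, Algebra.algebraMap_eq_smul_one]
        rw [this]
        exact Submodule.smul_mem _ _ (Submodule.subset_span ⟨0, rfl⟩)
      | add p q hp hq ihp ihq => exact add_mem ihp ihq
      | mul p q hp hq ihp ihq => exact charSpan_mul ihp ihq
      | star p hp ihp => exact charSpan_star ihp
    exact this P hPA
  -- final contradiction
  have hIP := hspanI P hPspan
  have hFP : ‖F - P‖ < 1/3 := by
    have := hPF
    rwa [dist_eq_norm] at this
  have hsub : ∀ g, I (F - P) g = I F g - I P g := fun g => by
    simp only [hI, ContinuousMap.sub_apply]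
    exact integral_sub (integr F g) (integr P g)
  have hbound : ∀ g, ‖I (F - P) g‖ ≤ (1/3) * c := by
    intro g
    simp only [hI]
    refine le_trans (norm_integral_le_of_norm_le_const
      (C := 1/3) (Filter.Eventually.of_forall fun h => ?_)) ?_
    · calc ‖(F - P) (g + ↑h)‖ ≤ ‖F - P‖ := ContinuousMap.norm_coe_le_norm _ _
        _ ≤ 1/3 := hFP.le
    · rw [hc]; exact le_rfl
  have hceq : (c : ℂ) = I (F - P) y - I (F - P) 0 := by
    rw [hsub y, hsub 0, hIFy, hIF0, hIP]
    ring
  have : c ≤ (1/3) * c + (1/3) * c := by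
    calc c = ‖(c : ℂ)‖ := by simp [abs_of_pos hcpos]
      _ = ‖I (F - P) y - I (F - P) 0‖ := by rw [hceq]
      _ ≤ ‖I (F - P) y‖ + ‖I (F - P) 0‖ := norm_sub_le _ _
      _ ≤ (1/3) * c + (1/3) * c := add_le_add (hbound y) (hbound 0)
  linarith

set_option maxHeartbeats 1000000 in
/-- Kronecker's theorem on simultaneous inhomogeneous Diophantine approximation. -/
theorem kronecker_inhomogeneous (k : ℕ) (θ φ : Fin k → ℝ)
    (h : ∀ a : Fin k → ℤ, (∃ m : ℤ, ∑ i, (a i : ℝ) * θ i = m) →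
      ∃ m : ℤ, ∑ i, (a i : ℝ) * φ i = m) :
    ∀ ε : ℝ, 0 < ε → ∃ (n : ℕ) (r : Fin k → ℤ),
      ∀ i, |(n : ℝ) * θ i - r i - φ i| ≤ ε := by
  intro ε hε
  set x : Fin k → AddCircle (1:ℝ) := fun i => (θ i : AddCircle (1:ℝ)) with hx
  set y : Fin k → AddCircle (1:ℝ) := fun i => (φ i : AddCircle (1:ℝ)) with hy
  have hchar : ∀ a : Fin k → ℤ, kchar a x = 1 → kchar a y = 1 := by
    intro a ha
    rw [hx] at ha
    rw [hy]
    exact (kchar_eq_one_iff a φ).mpr (h a ((kchar_eq_one_iff a θ).mp ha))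
  have hyc := key_mem_closure x y hchar
  have hyc2 : y ∈ closure (Set.range fun n : ℕ => n • x) :=
    closure_minimal (orbit_closure x) isClosed_closure hyc
  obtain ⟨b, ⟨n, rfl⟩, hbd⟩ := Metric.mem_closure_iff.mp hyc2 ε hε
  refine ⟨n, fun i => -round (φ i - (n : ℝ) * θ i), fun i => ?_⟩
  have hdi : dist (y i) ((n • x) i) ≤ dist y (n • x) := dist_le_pi_dist y (n • x) i
  have hni : (n • x) i = (((n : ℝ) * θ i : ℝ) : AddCircle (1:ℝ)) := by
    rw [hx]
    show n • ((θ i : AddCircle (1:ℝ))) = _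
    rw [← AddCircle.coe_nsmul]
    norm_num [nsmul_eq_mul]
  have : dist (y i) ((n • x) i) = ‖((φ i - (n:ℝ) * θ i : ℝ) : AddCircle (1:ℝ))‖ := by
    rw [hni, hy]
    show dist ((φ i : AddCircle (1:ℝ))) _ = _
    rw [dist_eq_norm, ← AddCircle.coe_sub]
  rw [this] at hdi
  rw [AddCircle.norm_eq] at hdi
  have hfin : |φ i - (n:ℝ) * θ i - round (1⁻¹ * (φ i - (n:ℝ) * θ i)) * 1| ≤ ε :=
    le_trans hdi hbd.le
  rw [inv_one, one_mul, mul_one] at hfin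
  have heq2 : (n:ℝ) * θ i - ((-round (φ i - (n:ℝ) * θ i) : ℤ) : ℝ) - φ i
      = -((φ i - (n:ℝ) * θ i) - (round (φ i - (n:ℝ) * θ i) : ℝ)) := by
    push_cast; ring
  rw [heq2, abs_neg]
  exact hfin
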